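/- Let p, p' be probability mass functions on {1,…,n}, let Y = (Y₁,…,Y_N) be i.i.d. samples from p, and let m̂ be the maximum likelihood decision between p and p'. Then the probability that the ML decision errs (chooses p' when p is true) is at most (∑ₖ √(p(k)p'(k)))^N. -/

import Mathlib

open Real

lemma prod_sqrt_aux {N : ℕ} (f : Fin N → ℝ) (hf : ∀ i, 0 ≤ f i) :
    Real.sqrt (∏ i, f i) = ∏ i, Real.sqrt (f i) := by
  induction N with
  | zero => simp
  | succ m ih =>
    rw [Fin.prod_univ_succ, Fin.prod_univ_succ,
      Real.sqrt_mul (hf 0), ih (fun i => f i.succ) (fun i => hf i.succ)]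

theorem stmt_9 (n N : ℕ) (p p' : Fin n → ℝ)
    (hp : ∀ k, 0 ≤ p k) (hp' : ∀ k, 0 ≤ p' k)
    (hps : ∑ k, p k = 1) (hps' : ∑ k, p' k = 1) :
    ∑ y ∈ Finset.univ.filter
        (fun y : Fin N → Fin n => ∏ i, p (y i) ≤ ∏ i, p' (y i)),
        ∏ i, p (y i)
      ≤ (∑ k, Real.sqrt (p k * p' k)) ^ N := by
  have key : ∀ y ∈ Finset.univ.filter
      (fun y : Fin N → Fin n => ∏ i, p (y i) ≤ ∏ i, p' (y i)),
      ∏ i, p (y i) ≤ ∏ i, Real.sqrt (p (y i) * p' (y i)) := by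
    intro y hy
    rw [Finset.mem_filter] at hy
    have h1 : (0:ℝ) ≤ ∏ i, p (y i) := Finset.prod_nonneg fun i _ => hp _
    calc ∏ i, p (y i) = Real.sqrt ((∏ i, p (y i)) * (∏ i, p (y i))) := by
          rw [Real.sqrt_mul_self h1]
      _ ≤ Real.sqrt ((∏ i, p (y i)) * (∏ i, p' (y i))) :=
          Real.sqrt_le_sqrt (mul_le_mul_of_nonneg_left hy.2 h1)
      _ = ∏ i, Real.sqrt (p (y i) * p' (y i)) := by
          rw [← Finset.prod_mul_distrib,
            prod_sqrt_aux _ (fun i => mul_nonneg (hp _) (hp' _))]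
  calc ∑ y ∈ Finset.univ.filter
        (fun y : Fin N → Fin n => ∏ i, p (y i) ≤ ∏ i, p' (y i)),
        ∏ i, p (y i)
      ≤ ∑ y ∈ Finset.univ.filter
        (fun y : Fin N → Fin n => ∏ i, p (y i) ≤ ∏ i, p' (y i)),
        ∏ i, Real.sqrt (p (y i) * p' (y i)) := Finset.sum_le_sum key
    _ ≤ ∑ y : Fin N → Fin n, ∏ i, Real.sqrt (p (y i) * p' (y i)) :=
        Finset.sum_le_sum_of_subset_of_nonneg (Finset.filter_subset _ _)
          (fun y _ _ => Finset.prod_nonneg fun i _ => Real.sqrt_nonneg _)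
    _ = (∑ k, Real.sqrt (p k * p' k)) ^ N := by
        rw [Finset.sum_pow', Fintype.piFinset_univ]
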